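/- arXiv:1804.08099 — 3 statements merged into one kernel-verified Lean document; each statement's English description precedes it below -/
import Mathlib

section
/- Let P ∈ ℂ[X₁,…,X_d] be a nonzero polynomial and let X₁ ⊆ X₂ ⊆ ℝ^d be open sets such that X₂ is P-convex for supports. If every φ ∈ C_c^∞(X₂, ℂ) with supp P̌(D)φ ⊆ X₁ satisfies supp φ ⊆ X₁, then X₁ is P-convex for supports. -/
open Filter MvPolynomial

noncomputable section

/-- Partial derivative in coordinate direction `i`. -/
noncomputable def pd {d : ℕ} (i : Fin d) (f : EuclideanSpace ℝ (Fin d) → ℂ) :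
    EuclideanSpace ℝ (Fin d) → ℂ :=
  fun x => fderiv ℝ f x (EuclideanSpace.single i 1)

/-- Iterated partial derivative `∂^α`. -/
noncomputable def pdPow {d : ℕ} (α : Fin d → ℕ) (f : EuclideanSpace ℝ (Fin d) → ℂ) :
    EuclideanSpace ℝ (Fin d) → ℂ :=
  (((List.finRange d).map fun i => (pd i)^[α i]).foldr (· ∘ ·) id) f

/-- The constant-coefficient differential operator
`P(D)f = Σ_{α} a_α (−i)^{|α|} ∂^α f`. -/
noncomputable def PD {d : ℕ} (P : MvPolynomial (Fin d) ℂ) (f : EuclideanSpace ℝ (Fin d) → ℂ) :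
    EuclideanSpace ℝ (Fin d) → ℂ :=
  fun x => ∑ α ∈ P.support, P.coeff α * (-Complex.I) ^ (α.sum fun _ e => e) * pdPow (⇑α) f x

/-- `P̌(ξ) = P(−ξ)`. -/
noncomputable def checkPoly {d : ℕ} (P : MvPolynomial (Fin d) ℂ) : MvPolynomial (Fin d) ℂ :=
  MvPolynomial.aeval (fun i => -MvPolynomial.X i) P

/-- Value of the principal part `P_m(x) = Σ_{|α| = deg P} a_α x^α` at a real point. -/
noncomputable def principalValue {d : ℕ} (P : MvPolynomial (Fin d) ℂ)
    (x : EuclideanSpace ℝ (Fin d)) : ℂ :=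
  ∑ α ∈ P.support.filter fun α => (α.sum fun _ e => e) = P.totalDegree,
    P.coeff α * ∏ i, (x i : ℂ) ^ α i

/-- Distance between two sets, valued in `[0,∞]` (so `= ∞` if one of them is empty). -/
noncomputable def setEDist {d : ℕ} (A B : Set (EuclideanSpace ℝ (Fin d))) : ENNReal :=
  ⨅ x ∈ A, EMetric.infEdist x B

/-- `X` is `P`-convex for supports. -/
def PConvexSupp {d : ℕ} (P : MvPolynomial (Fin d) ℂ) (X : Set (EuclideanSpace ℝ (Fin d))) :
    Prop :=
  ∀ φ : EuclideanSpace ℝ (Fin d) → ℂ, ContDiff ℝ (⊤ : ℕ∞) φ → HasCompactSupport φ →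
    tsupport φ ⊆ X →
    setEDist (tsupport φ) Xᶜ = setEDist (tsupport (PD (checkPoly P) φ)) Xᶜ

/-- `u ∈ ℰ_P(X)`: `u` is smooth on `X` and satisfies `P(D)u = 0` on `X`. -/
def SolOn {d : ℕ} (P : MvPolynomial (Fin d) ℂ) (X : Set (EuclideanSpace ℝ (Fin d)))
    (u : EuclideanSpace ℝ (Fin d) → ℂ) : Prop :=
  ContDiffOn ℝ (⊤ : ℕ∞) u X ∧ ∀ x ∈ X, PD P u x = 0

/-- `(X₁, X₂)` is a `P`-Runge pair. -/
def RungePair {d : ℕ} (P : MvPolynomial (Fin d) ℂ)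
    (X₁ X₂ : Set (EuclideanSpace ℝ (Fin d))) : Prop :=
  ∀ u, SolOn P X₁ u → ∀ K : Set (EuclideanSpace ℝ (Fin d)), IsCompact K → K ⊆ X₁ →
    ∀ l : ℕ, ∀ ε : ℝ, 0 < ε →
      ∃ v, SolOn P X₂ v ∧ ∀ x ∈ K, ∀ α : Fin d → ℕ, (∑ i, α i) ≤ l →
        ‖pdPow α u x - pdPow α v x‖ < ε

/-- `X₂` contains a compact connected component of `(ℝ^d ∖ X₁) ∩ {x : x_i = c}`
for some `c ∈ ℝ`. -/
def TrappedComponent {d : ℕ} (X₁ X₂ : Set (EuclideanSpace ℝ (Fin d))) (i : Fin d) : Prop :=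
  ∃ c : ℝ, ∃ x ∈ X₁ᶜ ∩ {y : EuclideanSpace ℝ (Fin d) | y i = c},
    IsCompact (connectedComponentIn (X₁ᶜ ∩ {y : EuclideanSpace ℝ (Fin d) | y i = c}) x) ∧
    connectedComponentIn (X₁ᶜ ∩ {y : EuclideanSpace ℝ (Fin d) | y i = c}) x ⊆ X₂
-- auxiliary lemmas
section Aux
open EMetric
abbrev Euc (d : ℕ) := EuclideanSpace ℝ (Fin d)

lemma contDiff_pd {d : ℕ} (i : Fin d) {f : Euc d → ℂ} (hf : ContDiff ℝ (⊤:ℕ∞) f) :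
    ContDiff ℝ (⊤:ℕ∞) (pd i f) :=
  (hf.fderiv_right (by exact_mod_cast le_top)).clm_apply contDiff_const

lemma tsupport_pd_subset {d : ℕ} (i : Fin d) (f : Euc d → ℂ) :
    tsupport (pd i f) ⊆ tsupport f := by
  apply closure_minimal _ isClosed_closure
  intro x hx
  have : fderiv ℝ f x ≠ 0 := by
    intro h; apply hx; simp [pd, h]
  exact support_fderiv_subset ℝ this

lemma pd_sub_const {d : ℕ} (i : Fin d) {f : Euc d → ℂ} (hf : ContDiff ℝ (⊤:ℕ∞) f) (c : Euc d) :
    pd i (fun x => f (x - c)) = fun x => pd i f (x - c) := by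
  funext x
  have hdf : HasFDerivAt f (fderiv ℝ f (x - c)) (x - c) :=
    (hf.differentiable (by simp) (x - c)).hasFDerivAt
  have ht : HasFDerivAt (fun y : Euc d => y - c) (ContinuousLinearMap.id ℝ (Euc d)) x :=
    (hasFDerivAt_id x).sub_const c
  have hcomp := hdf.comp x ht
  simp only [pd]
  rw [show (fun x => f (x - c)) = f ∘ (fun y : Euc d => y - c) from rfl, hcomp.fderiv]
  simp

def Nice {d : ℕ} (T : (Euc d → ℂ) → (Euc d → ℂ)) : Prop :=
  ∀ f : Euc d → ℂ, ContDiff ℝ (⊤:ℕ∞) f →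
    ContDiff ℝ (⊤:ℕ∞) (T f) ∧ tsupport (T f) ⊆ tsupport f ∧
    ∀ c : Euc d, T (fun x => f (x - c)) = fun x => (T f) (x - c)

lemma nice_id {d : ℕ} : Nice (d := d) id :=
  fun _ hf => ⟨hf, subset_rfl, fun _ => rfl⟩

lemma nice_comp {d : ℕ} {T S : (Euc d → ℂ) → (Euc d → ℂ)} (hT : Nice T) (hS : Nice S) :
    Nice (T ∘ S) := by
  intro f hf
  obtain ⟨h1, h2, h3⟩ := hS f hf
  obtain ⟨g1, g2, g3⟩ := hT (S f) h1
  refine ⟨g1, g2.trans h2, fun c => ?_⟩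
  simp only [Function.comp_apply, h3 c, g3 c]

lemma nice_pd {d : ℕ} (i : Fin d) : Nice (pd i) :=
  fun _ hf => ⟨contDiff_pd i hf, tsupport_pd_subset i _, fun c => pd_sub_const i hf c⟩

lemma nice_iterate {d : ℕ} {T : (Euc d → ℂ) → (Euc d → ℂ)} (hT : Nice T) (k : ℕ) :
    Nice (T^[k]) := by
  induction k with
  | zero => exact nice_id
  | succ n ih =>
      rw [Function.iterate_succ]
      exact nice_comp ih hT

lemma nice_foldr {d : ℕ} (α : Fin d → ℕ) (l : List (Fin d)) :
    Nice ((l.map fun i => (pd i)^[α i]).foldr (· ∘ ·) id) := by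
  induction l with
  | nil => exact nice_id
  | cons i l ih =>
      rw [List.map_cons, List.foldr_cons]
      exact nice_comp (nice_iterate (nice_pd i) (α i)) ih

lemma nice_pdPow {d : ℕ} (α : Fin d → ℕ) : Nice (pdPow α) :=
  nice_foldr α (List.finRange d)

lemma contDiff_PD {d : ℕ} (Q : MvPolynomial (Fin d) ℂ) {f : Euc d → ℂ}
    (hf : ContDiff ℝ (⊤:ℕ∞) f) : ContDiff ℝ (⊤:ℕ∞) (PD Q f) := by
  apply ContDiff.sum
  intro α _
  exact contDiff_const.mul ((nice_pdPow (⇑α) f hf).1)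

lemma tsupport_PD_subset {d : ℕ} (Q : MvPolynomial (Fin d) ℂ) (f : Euc d → ℂ)
    (hf : ContDiff ℝ (⊤:ℕ∞) f) : tsupport (PD Q f) ⊆ tsupport f := by
  apply closure_minimal _ isClosed_closure
  intro x hx
  obtain ⟨α, -, hα⟩ := Finset.exists_ne_zero_of_sum_ne_zero hx
  have hpd : pdPow (⇑α) f x ≠ 0 := fun h => hα (by rw [h, mul_zero])
  exact (nice_pdPow (⇑α) f hf).2.1 (subset_closure hpd)

lemma PD_sub_const {d : ℕ} (Q : MvPolynomial (Fin d) ℂ) {f : Euc d → ℂ}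
    (hf : ContDiff ℝ (⊤:ℕ∞) f) (c : Euc d) :
    PD Q (fun x => f (x - c)) = fun x => PD Q f (x - c) := by
  funext x
  simp only [PD]
  refine Finset.sum_congr rfl fun α _ => ?_
  rw [(nice_pdPow (⇑α) f hf).2.2 c]

lemma tsupport_sub_const {d : ℕ} (f : Euc d → ℂ) (c : Euc d) :
    tsupport (fun x => f (x - c)) = (fun y => y + c) '' tsupport f := by
  have h1 : Function.support (fun x => f (x - c))
      = (fun y : Euc d => y + c) '' Function.support f := by
    ext x
    simp only [Function.mem_support, Set.mem_image]
    constructor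
    · intro hx; exact ⟨x - c, hx, by abel⟩
    · rintro ⟨y, hy, rfl⟩; simpa using hy
  have h2 := (Homeomorph.addRight c).image_closure (Function.support f)
  have h3 : ⇑(Homeomorph.addRight c) = fun y : Euc d => y + c := rfl
  rw [h3] at h2
  unfold tsupport
  rw [h1, ← h2]

lemma setEDist_le_infEdist {d : ℕ} {A B : Set (Euc d)} {x}
    (hx : x ∈ A) : setEDist A B ≤ infEdist x B := iInf₂_le x hx

lemma le_setEDist {d : ℕ} {c : ENNReal} {A B : Set (Euc d)} :
    c ≤ setEDist A B ↔ ∀ x ∈ A, c ≤ infEdist x B := le_iInf₂_iff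

lemma edist_add_smul {d : ℕ} (z : Euc d) (t : ℝ) (h : Euc d) :
    edist z (z + t • h) = ENNReal.ofReal (|t| * ‖h‖) := by
  rw [edist_eq_enorm_sub]
  have : z - (z + t • h) = -(t • h) := by abel
  rw [this, enorm_neg, ← ofReal_norm, norm_smul]
  simp [Real.norm_eq_abs]

end Aux


/-- For `P ≠ 0` and open `X₁ ⊆ X₂` with `X₂` `P`-convex for supports:
if every `φ ∈ 𝒟(X₂)` with `supp P̌(D)φ ⊆ X₁` has `supp φ ⊆ X₁`, then `X₁` is `P`-convex
for supports. -/
theorem pconvex_of_support_condition {d : ℕ} (P : MvPolynomial (Fin d) ℂ) (hP : P ≠ 0)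
    (X₁ X₂ : Set (EuclideanSpace ℝ (Fin d))) (h12 : X₁ ⊆ X₂)
    (hX₁ : IsOpen X₁) (hX₂ : IsOpen X₂) (hc₂ : PConvexSupp P X₂)
    (hsupp : ∀ φ : EuclideanSpace ℝ (Fin d) → ℂ, ContDiff ℝ (⊤ : ℕ∞) φ →
      HasCompactSupport φ → tsupport φ ⊆ X₂ → tsupport (PD (checkPoly P) φ) ⊆ X₁ →
      tsupport φ ⊆ X₁) :
    PConvexSupp P X₁ := by
  classical
  intro φ hφ hcs hsub
  open EMetric in
  set Q := checkPoly P with hQ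
  set δ := setEDist (tsupport (PD Q φ)) X₁ᶜ with hδ
  have hδle : ∀ z ∈ tsupport (PD Q φ), δ ≤ EMetric.infEdist z X₁ᶜ :=
    fun z hz => setEDist_le_infEdist hz
  have key : ∀ h : EuclideanSpace ℝ (Fin d), ENNReal.ofReal ‖h‖ < δ →
      ∀ x ∈ tsupport φ, x + h ∈ X₁ := by
    intro h hh
    by_cases hh0 : h = 0
    · intro x hx; subst hh0; simpa using hsub hx
    -- general setup
    set ε₀ := δ - ENNReal.ofReal ‖h‖ with hε
    have hε₀ : 0 < ε₀ := tsub_pos_of_lt hh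
    set φT : ℝ → (EuclideanSpace ℝ (Fin d) → ℂ) := fun t x => φ (x - t • h) with hφT
    have hTsm : ∀ t, ContDiff ℝ (⊤:ℕ∞) (φT t) :=
      fun t => hφ.comp (contDiff_id.sub contDiff_const)
    have hTsupp : ∀ t, tsupport (φT t) = (fun y => y + t • h) '' tsupport φ :=
      fun t => tsupport_sub_const φ (t • h)
    have hTcs : ∀ t, HasCompactSupport (φT t) := fun t => by
      rw [HasCompactSupport, hTsupp t]
      exact hcs.image (continuous_id.add continuous_const)
    have hTPD : ∀ t, PD Q (φT t) = fun x => PD Q φ (x - t • h) :=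
      fun t => PD_sub_const Q hφ (t • h)
    have hTPDsupp : ∀ t, tsupport (PD Q (φT t)) = (fun y => y + t • h) '' tsupport (PD Q φ) :=
      fun t => by rw [hTPD t]; exact tsupport_sub_const _ _
    -- (b) quantitative lower bound for the support of P(D) of the translates
    have hb : ∀ t : ℝ, 0 ≤ t → t ≤ 1 → ∀ y ∈ tsupport (PD Q (φT t)),
        ε₀ ≤ EMetric.infEdist y X₁ᶜ := by
      intro t ht0 ht1 y hy
      rw [hTPDsupp t] at hy
      obtain ⟨z, hz, rfl⟩ := hy
      have h1 : δ ≤ EMetric.infEdist z X₁ᶜ := hδle z hz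
      have h2 : EMetric.infEdist z X₁ᶜ ≤
          EMetric.infEdist (z + t • h) X₁ᶜ + edist z (z + t • h) :=
        EMetric.infEdist_le_infEdist_add_edist
      have h3 : edist z (z + t • h) ≤ ENNReal.ofReal ‖h‖ := by
        rw [edist_add_smul]
        apply ENNReal.ofReal_le_ofReal
        calc |t| * ‖h‖ ≤ 1 * ‖h‖ := by
              apply mul_le_mul_of_nonneg_right _ (norm_nonneg _)
              rw [abs_of_nonneg ht0]; exact ht1
          _ = ‖h‖ := one_mul _
      have h4 : δ ≤ EMetric.infEdist (z + t • h) X₁ᶜ + ENNReal.ofReal ‖h‖ :=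
        h1.trans (h2.trans (add_le_add le_rfl h3))
      exact tsub_le_iff_right.mpr h4
    -- (c) stepping lemma
    have hstep : ∀ t : ℝ, 0 ≤ t → t ≤ 1 → tsupport (φT t) ⊆ X₂ →
        ∀ t' : ℝ, ENNReal.ofReal (|t' - t| * ‖h‖) < ε₀ → tsupport (φT t') ⊆ X₂ := by
      intro t ht0 ht1 hX t' hlt
      have heq := hc₂ (φT t) (hTsm t) (hTcs t) hX
      have hge : ε₀ ≤ setEDist (tsupport (PD Q (φT t))) X₂ᶜ := by
        rw [le_setEDist]
        intro y hy
        exact (hb t ht0 ht1 y hy).trans (EMetric.infEdist_anti (Set.compl_subset_compl.mpr h12))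
      have hptfar : ∀ x ∈ tsupport (φT t), ε₀ ≤ EMetric.infEdist x X₂ᶜ := by
        intro x hx
        calc ε₀ ≤ setEDist (tsupport (PD Q (φT t))) X₂ᶜ := hge
          _ = setEDist (tsupport (φT t)) X₂ᶜ := heq.symm
          _ ≤ EMetric.infEdist x X₂ᶜ := setEDist_le_infEdist hx
      intro x' hx'
      rw [hTsupp t'] at hx'
      obtain ⟨z, hz, rfl⟩ := hx'
      by_contra hmem
      have hx : z + t • h ∈ tsupport (φT t) := (hTsupp t) ▸ ⟨z, hz, rfl⟩
      have hle : EMetric.infEdist (z + t • h) X₂ᶜ ≤ edist (z + t • h) (z + t' • h) :=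
        EMetric.infEdist_le_edist_of_mem hmem
      have hed : edist (z + t • h) (z + t' • h) = ENNReal.ofReal (|t' - t| * ‖h‖) := by
        have : z + t' • h = (z + t • h) + (t' - t) • h := by
          rw [sub_smul]; abel
        rw [this, edist_add_smul]
      rw [hed] at hle
      exact absurd ((hptfar _ hx).trans hle) (not_le.mpr hlt)
    -- choose the step size ρ
    have hnorm : 0 < ‖h‖ := norm_pos_iff.mpr hh0
    set ε₁ : ℝ := (min ε₀ 1).toReal with hε₁
    have hminlt : min ε₀ 1 ≠ ⊤ := ((min_le_right _ _).trans_lt ENNReal.one_lt_top).ne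
    have hε₁pos : 0 < ε₁ :=
      ENNReal.toReal_pos (lt_min hε₀ zero_lt_one).ne' hminlt
    have hofε₁ : ENNReal.ofReal ε₁ ≤ ε₀ := by
      rw [hε₁, ENNReal.ofReal_toReal hminlt]; exact min_le_left _ _
    set ρ : ℝ := ε₁ / (2 * ‖h‖) with hρ
    have hρpos : 0 < ρ := div_pos hε₁pos (by positivity)
    have hρkey : ENNReal.ofReal (ρ * ‖h‖) < ε₀ := by
      have : ρ * ‖h‖ = ε₁ / 2 := by
        rw [hρ]; field_simp
      rw [this]
      calc ENNReal.ofReal (ε₁ / 2) < ENNReal.ofReal ε₁ :=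
            (ENNReal.ofReal_lt_ofReal_iff hε₁pos).mpr (by linarith)
        _ ≤ ε₀ := hofε₁
    -- (e) induction
    have hind : ∀ n : ℕ, ∀ t : ℝ, 0 ≤ t → t ≤ 1 → t ≤ n * ρ → tsupport (φT t) ⊆ X₂ := by
      intro n
      induction n with
      | zero =>
          intro t ht0 ht1 htn
          have ht : t = 0 := le_antisymm (by simpa using htn) ht0
          subst ht
          have : φT 0 = φ := by funext x; simp [hφT]
          rw [this]
          exact hsub.trans (h12)
      | succ n ih =>
          intro t ht0 ht1 htn
          set s : ℝ := max (t - ρ) 0 with hs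
          have hs0 : 0 ≤ s := le_max_right _ _
          have hst : s ≤ t := max_le (by linarith) ht0
          have hs1 : s ≤ 1 := hst.trans ht1
          have hsn : s ≤ n * ρ := by
            apply max_le
            · push_cast at htn; linarith
            · positivity
          have hts : |t - s| ≤ ρ := by
            rw [abs_of_nonneg (by linarith)]
            have : t - ρ ≤ s := le_max_left _ _
            linarith
          have hdist : ENNReal.ofReal (|t - s| * ‖h‖) < ε₀ := by
            refine lt_of_le_of_lt ?_ hρkey
            exact ENNReal.ofReal_le_ofReal (mul_le_mul_of_nonneg_right hts (norm_nonneg _))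
          exact hstep s hs0 hs1 (ih s hs0 hs1 hsn) t hdist
    -- conclude for t = 1
    have h1X₂ : tsupport (φT 1) ⊆ X₂ := by
      refine hind (⌈1 / ρ⌉₊) 1 zero_le_one le_rfl ?_
      have := Nat.le_ceil (1 / ρ)
      calc (1:ℝ) = (1 / ρ) * ρ := by field_simp
        _ ≤ (⌈1 / ρ⌉₊ : ℝ) * ρ := mul_le_mul_of_nonneg_right this (le_of_lt hρpos)
    have hPD1 : tsupport (PD (checkPoly P) (φT 1)) ⊆ X₁ := by
      intro y hy
      have hbd := hb 1 zero_le_one le_rfl y hy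
      by_contra hmem
      have h0 : EMetric.infEdist y X₁ᶜ = 0 :=
        EMetric.infEdist_zero_of_mem (Set.mem_compl hmem)
      rw [h0] at hbd
      exact hε₀.ne' (le_zero_iff.mp hbd)
    have h1X₁ : tsupport (φT 1) ⊆ X₁ := hsupp (φT 1) (hTsm 1) (hTcs 1) h1X₂ hPD1
    intro x hx
    have : x + h ∈ tsupport (φT 1) := by
      rw [hTsupp 1]
      exact ⟨x, hx, by rw [one_smul]⟩
    exact h1X₁ this
  -- final assembly
  apply le_antisymm
  · rw [hδ, setEDist]
    refine le_iInf₂ fun z hz => ?_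
    exact setEDist_le_infEdist (tsupport_PD_subset Q φ hφ hz)
  · rw [le_setEDist]
    intro x hx
    by_contra hlt
    rw [not_le] at hlt
    obtain ⟨y, hy, hyd⟩ := EMetric.infEdist_lt_iff.mp hlt
    have hnorm : ENNReal.ofReal ‖y - x‖ < δ := by
      rw [edist_eq_enorm_sub, ← ofReal_norm] at hyd
      rwa [norm_sub_rev] at hyd
    have := key (y - x) hnorm x hx
    rw [add_sub_cancel] at this
    exact hy this


end
end

section
/- Let d ≥ 2, m ≥ 1, and Q₀,…,Q_m ∈ ℂ[X₁,…,X_{d−1}] with Q_m = 1. Let Y ⊆ ℝ^{d−1} be open and h₀,…,h_{m−1} ∈ C^∞(Y, ℂ). Then for every 0 ≤ s ≤ m−1: Σ_{j=0}^{s} Σ_{k=m−1−s}^{m−1−j} Q_{j+k+1}(D) 𝒞_{k+s}(h_j) = h_s. -/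
open Filter MvPolynomial

noncomputable section

/-- The recursively defined operators `𝒞_l`. -/
noncomputable def CC {n : ℕ} (m : ℕ) (Q : ℕ → MvPolynomial (Fin n) ℂ) (l : ℕ)
    (f : EuclideanSpace ℝ (Fin n) → ℂ) : EuclideanSpace ℝ (Fin n) → ℂ :=
  if l + 1 < m then 0
  else if l + 1 = m then f
  else -∑ k : Fin m, PD (Q k.1) (CC m Q (k.1 + l - m) f)
termination_by l
decreasing_by
  simp_wf
  have := k.2
  omega
lemma aux_pd_zero {d : ℕ} (i : Fin d) : pd i 0 = 0 := by
  funext x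
  show (fderiv ℝ (fun _ => (0:ℂ)) x) (EuclideanSpace.single i 1) = 0
  rw [fderiv_fun_const]; simp

lemma aux_foldr_zero {d : ℕ} (α : Fin d → ℕ) (L : List (Fin d)) :
    ((L.map fun i => (pd i)^[α i]).foldr (· ∘ ·) id) 0 = 0 := by
  induction L with
  | nil => rfl
  | cons a t ih =>
      simp only [List.map_cons, List.foldr_cons, Function.comp_apply, ih]
      exact Function.iterate_fixed (aux_pd_zero a) (α a)

lemma aux_pdPow_zero {d : ℕ} (α : Fin d → ℕ) :
    pdPow α (0 : EuclideanSpace ℝ (Fin d) → ℂ) = 0 := aux_foldr_zero α _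

lemma aux_PD_zero {d : ℕ} (P : MvPolynomial (Fin d) ℂ) : PD P 0 = 0 := by
  funext x; simp [PD, aux_pdPow_zero]

lemma aux_foldr_repl {d m : ℕ} (f : EuclideanSpace ℝ (Fin d) → ℂ) :
    (List.foldr (fun (x1 x2 : (EuclideanSpace ℝ (Fin d) → ℂ) → (EuclideanSpace ℝ (Fin d) → ℂ)) =>
      x1 ∘ x2) id (List.replicate m id)) f = f := by
  induction m with
  | zero => rfl
  | succ k ih => rw [List.replicate_succ, List.foldr_cons]; exact ih

lemma aux_PD_one {d : ℕ} (f : EuclideanSpace ℝ (Fin d) → ℂ) :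
    PD (1 : MvPolynomial (Fin d) ℂ) f = f := by
  funext x
  have hs : (1 : MvPolynomial (Fin d) ℂ).support = {0} := by
    classical
    rw [show (1 : MvPolynomial (Fin d) ℂ) = MvPolynomial.monomial 0 1 from rfl,
      MvPolynomial.support_monomial, if_neg one_ne_zero]
  rw [PD, hs, Finset.sum_singleton]
  simp [pdPow, aux_foldr_repl]

lemma aux_CC_lt {n m l : ℕ} (Q : ℕ → MvPolynomial (Fin n) ℂ) (f) (h : l + 1 < m) :
    CC m Q l f = 0 := by rw [CC]; simp [h]

lemma aux_CC_eq {n m l : ℕ} (Q : ℕ → MvPolynomial (Fin n) ℂ) (f) (h : l + 1 = m) :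
    CC m Q l f = f := by rw [CC]; simp [h]

lemma aux_CC_ge {n m l : ℕ} (Q : ℕ → MvPolynomial (Fin n) ℂ) (f) (h : m ≤ l) :
    CC m Q l f = -∑ k : Fin m, PD (Q k.1) (CC m Q (k.1 + l - m) f) := by
  rw [CC]; rw [if_neg (by omega), if_neg (by omega)]

lemma aux_inner_zero {n m s j : ℕ} (Q : ℕ → MvPolynomial (Fin n) ℂ) (hQm : Q m = 1)
    (f : EuclideanSpace ℝ (Fin n) → ℂ) (hj : j < s) (hs : s < m) :
    ∑ k ∈ Finset.Icc (m-1-s) (m-1-j), PD (Q (j+k+1)) (CC m Q (k+s) f) = 0 := by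
  obtain ⟨c, hc⟩ : ∃ c, m-1-j = c+1 := ⟨m-2-j, by omega⟩
  rw [hc, Finset.sum_Icc_succ_top (by omega : m-1-s ≤ c+1)]
  have h1 : j + (c+1) + 1 = m := by omega
  rw [h1, hQm, aux_PD_one, aux_CC_ge Q f (by omega : m ≤ c+1+s)]
  rw [Fin.sum_univ_eq_sum_range (fun k => PD (Q k) (CC m Q (k + (c+1+s) - m) f)) m]
  rw [Finset.range_eq_Ico,
    ← Finset.sum_Ico_consecutive _ (Nat.zero_le (m-s+j)) (by omega : m-s+j ≤ m)]
  have hz : ∑ k ∈ Finset.Ico 0 (m-s+j), PD (Q k) (CC m Q (k + (c+1+s) - m) f) = 0 := by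
    refine Finset.sum_eq_zero fun k hk => ?_
    rw [Finset.mem_Ico] at hk
    rw [aux_CC_lt Q f (by omega), aux_PD_zero]
  rw [hz, zero_add, add_neg_eq_zero]
  refine Finset.sum_nbij' (fun k => j+k+1) (fun r => r-j-1) ?_ ?_ ?_ ?_ ?_
  · intro a ha; simp only [Finset.mem_Icc] at ha; simp only [Finset.mem_Ico]; omega
  · intro a ha; simp only [Finset.mem_Ico] at ha; simp only [Finset.mem_Icc]; omega
  · intro a ha; simp only [Finset.mem_Icc] at ha; beta_reduce; omega
  · intro a ha; simp only [Finset.mem_Ico] at ha; beta_reduce; omega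
  · intro a ha
    simp only [Finset.mem_Icc] at ha
    beta_reduce
    have he : (j+a+1) + (c+1+s) - m = a + s := by omega
    rw [he]


/-- **Proposition 4.2.** For `Q_m = 1` and `h₀,…,h_{m−1} ∈ C^∞(Y)`:
`Σ_{j=0}^s Σ_{k=m−1−s}^{m−1−j} Q_{j+k+1}(D) 𝒞_{k+s}(h_j) = h_s` on `Y`
for every `0 ≤ s ≤ m−1`. -/
theorem cauchy_data_identity {n : ℕ} (hn : 1 ≤ n) (m : ℕ) (hm : 1 ≤ m)
    (Q : ℕ → MvPolynomial (Fin n) ℂ) (hQm : Q m = 1)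
    (Y : Set (EuclideanSpace ℝ (Fin n))) (hY : IsOpen Y)
    (h : ℕ → EuclideanSpace ℝ (Fin n) → ℂ)
    (hsm : ∀ j < m, ContDiffOn ℝ (⊤ : ℕ∞) (h j) Y) :
    ∀ s < m, ∀ x ∈ Y,
      (∑ j ∈ Finset.range (s+1), ∑ k ∈ Finset.Icc (m-1-s) (m-1-j),
        PD (Q (j+k+1)) (CC m Q (k+s) (h j))) x = h s x := by
  intro s hs x _
  have key : (∑ j ∈ Finset.range (s+1), ∑ k ∈ Finset.Icc (m-1-s) (m-1-j),
      PD (Q (j+k+1)) (CC m Q (k+s) (h j))) = h s := by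
    rw [Finset.sum_range_succ]
    have hrest : ∑ j ∈ Finset.range s, ∑ k ∈ Finset.Icc (m-1-s) (m-1-j),
        PD (Q (j+k+1)) (CC m Q (k+s) (h j)) = 0 :=
      Finset.sum_eq_zero fun j hj =>
        aux_inner_zero Q hQm (h j) (Finset.mem_range.mp hj) hs
    rw [hrest, zero_add]
    have : m-1-s = m-1-s := rfl
    rw [Finset.Icc_self, Finset.sum_singleton]
    have h1 : s + (m-1-s) + 1 = m := by omega
    rw [h1, hQm, aux_PD_one, aux_CC_eq Q (h s) (by omega : (m-1-s)+s+1 = m)]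
  rw [key]

end
end

section
/- Let d ≥ 2, m ≥ 1, and Q₀,…,Q_m ∈ ℂ[X₁,…,X_{d−1}] with Q_m = 1. Then for every open Y ⊆ ℝ^{d−1}, every l ∈ ℕ₀ and every f ∈ C^∞(Y, ℂ): 𝒞_{m−1+l}(f) = Σ_{s ∈ ℕ₀^m, σ(s) = l} (−1)^{|s|} (|s|!/(s₁!⋯s_m!)) (∏_{k=1}^m Q_{m−k}(D)^{s_k}) f, where σ(s) = Σ_{j=1}^m j s_j and |s| = s₁ + … + s_m. -/
open Filter MvPolynomial

noncomputable section

open scoped Nat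

variable {n : ℕ} {Y : Set (EuclideanSpace ℝ (Fin n))} {f g : EuclideanSpace ℝ (Fin n) → ℂ}

def Sm (Y : Set (EuclideanSpace ℝ (Fin n))) (f : EuclideanSpace ℝ (Fin n) → ℂ) : Prop :=
  ContDiffOn ℝ (⊤ : ℕ∞) f Y

theorem Sm.cda (hf : Sm Y f) (hY : IsOpen Y) {x} (hx : x ∈ Y) : ContDiffAt ℝ (⊤:ℕ∞) f x :=
  hf.contDiffAt (hY.mem_nhds hx)

theorem pd_congr (hY : IsOpen Y) (hfg : Set.EqOn f g Y) (i : Fin n) :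
    Set.EqOn (pd i f) (pd i g) Y := by
  intro x hx
  have : f =ᶠ[nhds x] g := Filter.eventuallyEq_of_mem (hY.mem_nhds hx) hfg
  simp only [pd, this.fderiv_eq]

theorem pd_sm (hY : IsOpen Y) (hf : Sm Y f) (i : Fin n) : Sm Y (pd i f) := by
  have h := hf.fderiv_of_isOpen (m := ((⊤:ℕ∞) : WithTop ℕ∞)) hY (le_of_eq rfl)
  exact h.clm_apply contDiffOn_const

theorem pd_add (hY : IsOpen Y) (hf : Sm Y f) (hg : Sm Y g) (i : Fin n) {x} (hx : x ∈ Y) :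
    pd i (fun y => f y + g y) x = pd i f x + pd i g x := by
  have hf' := (hf.cda hY hx).differentiableAt (by simp)
  have hg' := (hg.cda hY hx).differentiableAt (by simp)
  simp [pd, fderiv_fun_add hf' hg']

theorem pd_smul (hY : IsOpen Y) (hf : Sm Y f) (c : ℂ) (i : Fin n) {x} (hx : x ∈ Y) :
    pd i (fun y => c * f y) x = c * pd i f x := by
  have hf' := (hf.cda hY hx).differentiableAt (by simp)
  simp [pd, fderiv_const_mul hf' c]

theorem pd_comm (hY : IsOpen Y) (hf : Sm Y f) (i j : Fin n) {x} (hx : x ∈ Y) :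
    pd i (pd j f) x = pd j (pd i f) x := by
  have hx' := hf.cda hY hx
  have hsymm : IsSymmSndFDerivAt ℝ f x := hx'.isSymmSndFDerivAt (by simp; exact WithTop.coe_le_coe.2 (le_top : (2:ℕ∞) ≤ ⊤))
  have hdF : DifferentiableAt ℝ (fderiv ℝ f) x :=
    (hx'.fderiv_right (m := ((⊤:ℕ∞) : WithTop ℕ∞)) (le_of_eq rfl)).differentiableAt (by simp)
  have key : ∀ v : EuclideanSpace ℝ (Fin n), ∀ w,
      fderiv ℝ (fun y => fderiv ℝ f y v) x w = fderiv ℝ (fderiv ℝ f) x w v := by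
    intro v w
    have := fderiv_clm_apply hdF (differentiableAt_const v)
    simp only [this]
    simp
  show fderiv ℝ (fun y => fderiv ℝ f y (EuclideanSpace.single j 1)) x (EuclideanSpace.single i 1)
      = fderiv ℝ (fun y => fderiv ℝ f y (EuclideanSpace.single i 1)) x (EuclideanSpace.single j 1)
  rw [key, key]
  exact hsymm _ _

/-- A "good" operator: preserves smoothness on `Y`, is local (congruence on `Y`),
and is ℂ-linear on smooth functions, all in the `EqOn Y` sense. -/
structure Good (Y : Set (EuclideanSpace ℝ (Fin n)))
    (T : (EuclideanSpace ℝ (Fin n) → ℂ) → (EuclideanSpace ℝ (Fin n) → ℂ)) : Prop where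
  sm : ∀ f, Sm Y f → Sm Y (T f)
  congr : ∀ f g, Set.EqOn f g Y → Set.EqOn (T f) (T g) Y
  add : ∀ f g, Sm Y f → Sm Y g → ∀ x ∈ Y, T (fun y => f y + g y) x = T f x + T g x
  smul : ∀ (c : ℂ) f, Sm Y f → ∀ x ∈ Y, T (fun y => c * f y) x = c * T f x

theorem good_pd (hY : IsOpen Y) (i : Fin n) : Good Y (pd i) :=
  ⟨fun f hf => pd_sm hY hf i, fun f g h => pd_congr hY h i,
   fun f g hf hg x hx => pd_add hY hf hg i hx,
   fun c f hf x hx => pd_smul hY hf c i hx⟩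

theorem good_id : Good Y (id : (EuclideanSpace ℝ (Fin n) → ℂ) → _) :=
  ⟨fun _ hf => hf, fun _ _ h => h, fun _ _ _ _ _ _ => rfl, fun _ _ _ _ _ => rfl⟩

theorem Good.comp {T U : (EuclideanSpace ℝ (Fin n) → ℂ) → (EuclideanSpace ℝ (Fin n) → ℂ)}
    (hT : Good Y T) (hU : Good Y U) : Good Y (T ∘ U) := by
  refine ⟨fun f hf => hT.sm _ (hU.sm _ hf), fun f g h => hT.congr _ _ (hU.congr _ _ h),
    fun f g hf hg x hx => ?_, fun c f hf x hx => ?_⟩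
  · have h1 : Set.EqOn (U fun y => f y + g y) (fun y => U f y + U g y) Y :=
      fun y hy => hU.add f g hf hg y hy
    have := hT.congr _ _ h1 hx
    simp only [Function.comp_apply] at this ⊢
    rw [this, hT.add _ _ (hU.sm _ hf) (hU.sm _ hg) x hx]
  · have h1 : Set.EqOn (U fun y => c * f y) (fun y => c * U f y) Y :=
      fun y hy => hU.smul c f hf y hy
    have := hT.congr _ _ h1 hx
    simp only [Function.comp_apply] at this ⊢
    rw [this, hT.smul c _ (hU.sm _ hf) x hx]

theorem Good.iterate {T : (EuclideanSpace ℝ (Fin n) → ℂ) → (EuclideanSpace ℝ (Fin n) → ℂ)}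
    (hT : Good Y T) (a : ℕ) : Good Y (T^[a]) := by
  induction a with
  | zero => simpa using (good_id : Good Y id)
  | succ a ih => rw [Function.iterate_succ]; exact ih.comp hT

theorem Good.zero_apply {T} (hT : Good Y T) {x} (hx : x ∈ Y) :
    T (fun _ => (0:ℂ)) x = 0 := by
  have h0 : Sm Y (fun _ => (0:ℂ)) := contDiffOn_const
  have := hT.smul 0 (fun _ => (0:ℂ)) h0 x hx
  simpa using this

theorem Good.sum_apply {ι : Type*} {T} (hT : Good Y T) (s : Finset ι)
    (g : ι → EuclideanSpace ℝ (Fin n) → ℂ) (hg : ∀ i ∈ s, Sm Y (g i)) {x} (hx : x ∈ Y) :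
    T (fun y => ∑ i ∈ s, g i y) x = ∑ i ∈ s, T (g i) x := by
  classical
  induction s using Finset.induction with
  | empty => simpa using hT.zero_apply hx
  | @insert a s ha ih =>
    have hga := hg a (Finset.mem_insert_self a s)
    have hgs : ∀ i ∈ s, Sm Y (g i) := fun i hi => hg i (Finset.mem_insert_of_mem hi)
    have hsum : Sm Y (fun y => ∑ i ∈ s, g i y) := by
      apply ContDiffOn.sum; intro i hi; exact hgs i hi
    have h1 : Set.EqOn (fun y => ∑ i ∈ insert a s, g i y)
        (fun y => g a y + ∑ i ∈ s, g i y) Y := by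
      intro y _; simp [Finset.sum_insert ha]
    rw [hT.congr _ _ h1 hx, hT.add _ _ hga hsum x hx, ih hgs,
      Finset.sum_insert ha]

/-- Apply a list of operators in order. -/
def applyL (L : List ((EuclideanSpace ℝ (Fin n) → ℂ) → (EuclideanSpace ℝ (Fin n) → ℂ)))
    (f : EuclideanSpace ℝ (Fin n) → ℂ) : EuclideanSpace ℝ (Fin n) → ℂ :=
  L.foldr (fun T g => T g) f

theorem foldr_comp_eq_applyL (L : List ((EuclideanSpace ℝ (Fin n) → ℂ) → _)) (f) :
    (L.foldr (· ∘ ·) id) f = applyL L f := by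
  induction L with
  | nil => rfl
  | cons T L ih =>
    show T ((L.foldr (· ∘ ·) id) f) = T (applyL L f)
    rw [ih]

@[simp] theorem applyL_nil (f : EuclideanSpace ℝ (Fin n) → ℂ) : applyL [] f = f := rfl
@[simp] theorem applyL_cons (T) (L : List _) (f : EuclideanSpace ℝ (Fin n) → ℂ) :
    applyL (T :: L) f = T (applyL L f) := rfl

theorem applyL_append (L₁ L₂ : List _) (f : EuclideanSpace ℝ (Fin n) → ℂ) :
    applyL (L₁ ++ L₂) f = applyL L₁ (applyL L₂ f) := by
  simp [applyL, List.foldr_append]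

theorem applyL_sm {L : List _} (hL : ∀ T ∈ L, Good Y T) {f : EuclideanSpace ℝ (Fin n) → ℂ}
    (hf : Sm Y f) : Sm Y (applyL L f) := by
  induction L with
  | nil => exact hf
  | cons T L ih =>
    exact (hL T (List.mem_cons_self)).sm _ (ih fun U hU => hL U (List.mem_cons_of_mem _ hU))

theorem applyL_congr {L : List _} (hL : ∀ T ∈ L, Good Y T)
    {f g : EuclideanSpace ℝ (Fin n) → ℂ} (hfg : Set.EqOn f g Y) :
    Set.EqOn (applyL L f) (applyL L g) Y := by
  induction L with
  | nil => exact hfg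
  | cons T L ih =>
    exact (hL T (List.mem_cons_self)).congr _ _
      (ih fun U hU => hL U (List.mem_cons_of_mem _ hU))

theorem applyL_id {L : List _} (hL : ∀ T ∈ L, T = id) (f : EuclideanSpace ℝ (Fin n) → ℂ) :
    applyL L f = f := by
  induction L with
  | nil => rfl
  | cons T L ih =>
    rw [applyL_cons, hL T (List.mem_cons_self), ih fun U hU => hL U (List.mem_cons_of_mem _ hU)]
    rfl

/-- `T` and `U` commute on smooth functions, on `Y`. -/
def CommOn (Y : Set (EuclideanSpace ℝ (Fin n)))
    (T U : (EuclideanSpace ℝ (Fin n) → ℂ) → (EuclideanSpace ℝ (Fin n) → ℂ)) : Prop :=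
  ∀ f, Sm Y f → ∀ x ∈ Y, T (U f) x = U (T f) x

theorem CommOn.symm {T U} (h : CommOn Y T U) : CommOn Y U T :=
  fun f hf x hx => (h f hf x hx).symm

theorem CommOn.comp_right {T U V} (hT : Good Y T) (hU : Good Y U) (hV : Good Y V)
    (hTU : CommOn Y T U) (hTV : CommOn Y T V) : CommOn Y T (U ∘ V) := by
  intro f hf x hx
  simp only [Function.comp_apply]
  have h1 : Set.EqOn (T (V f)) (V (T f)) Y := fun y hy => hTV f hf y hy
  calc T (U (V f)) x = U (T (V f)) x := hTU (V f) (hV.sm _ hf) x hx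
    _ = U (V (T f)) x := hU.congr _ _ h1 hx

theorem CommOn.iterate_right {T U} (hT : Good Y T) (hU : Good Y U) (hTU : CommOn Y T U) (a : ℕ) :
    CommOn Y T (U^[a]) := by
  induction a with
  | zero => intro f hf x hx; simp
  | succ a ih =>
    rw [Function.iterate_succ]
    exact CommOn.comp_right hT (hU.iterate a) hU ih hTU

theorem pdPow_eq (α : Fin n → ℕ) (f : EuclideanSpace ℝ (Fin n) → ℂ) :
    pdPow α f = applyL ((List.finRange n).map fun i => (pd i)^[α i]) f :=
  foldr_comp_eq_applyL _ _

theorem good_applyL_struct {L : List ((EuclideanSpace ℝ (Fin n) → ℂ) → (EuclideanSpace ℝ (Fin n) → ℂ))}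
    (hL : ∀ T ∈ L, Good Y T) : Good Y (applyL L) := by
  induction L with
  | nil => exact good_id
  | cons T L ih =>
    have h1 := hL T (List.mem_cons_self)
    have h2 := ih fun U hU => hL U (List.mem_cons_of_mem _ hU)
    have := h1.comp h2
    refine ⟨fun f hf => this.sm f hf, fun f g h => this.congr f g h,
      fun f g hf hg => this.add f g hf hg, fun c f hf => this.smul c f hf⟩

theorem good_pdPow (hY : IsOpen Y) (α : Fin n → ℕ) : Good Y (pdPow α) := by
  have hL : ∀ T ∈ (List.finRange n).map fun i => (pd i)^[α i], Good Y T := by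
    intro T hT
    rcases List.mem_map.1 hT with ⟨i, _, rfl⟩
    exact (good_pd hY i).iterate _
  have he : pdPow (d := n) α = applyL ((List.finRange n).map fun i => (pd i)^[α i]) :=
    funext (pdPow_eq α)
  rw [he]
  exact good_applyL_struct hL

theorem good_linComb (hY : IsOpen Y) {ι : Type*} (s : Finset ι) (c : ι → ℂ)
    (U : ι → (EuclideanSpace ℝ (Fin n) → ℂ) → (EuclideanSpace ℝ (Fin n) → ℂ))
    (hU : ∀ i ∈ s, Good Y (U i)) :
    Good Y (fun f x => ∑ i ∈ s, c i * U i f x) := by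
  refine ⟨fun f hf => ?_, fun f g h x hx => ?_, fun f g hf hg x hx => ?_, fun a f hf x hx => ?_⟩
  · exact ContDiffOn.sum fun i hi => contDiffOn_const.mul ((hU i hi).sm f hf)
  · exact Finset.sum_congr rfl fun i hi => by rw [(hU i hi).congr f g h hx]
  · rw [← Finset.sum_add_distrib]
    refine Finset.sum_congr rfl fun i hi => ?_
    rw [(hU i hi).add f g hf hg x hx]; ring
  · rw [Finset.mul_sum]
    refine Finset.sum_congr rfl fun i hi => ?_
    rw [(hU i hi).smul a f hf x hx]; ring

theorem good_PD (hY : IsOpen Y) (P : MvPolynomial (Fin n) ℂ) : Good Y (PD P) :=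
  good_linComb hY P.support (fun α => P.coeff α * (-Complex.I) ^ (α.sum fun _ e => e))
    (fun α => pdPow (⇑α)) (fun α _ => good_pdPow hY α)

theorem comm_pd_pd (hY : IsOpen Y) (i j : Fin n) : CommOn Y (pd i) (pd j) :=
  fun f hf x hx => pd_comm hY hf i j hx

theorem comm_applyL {T} (hT : Good Y T) {L : List _}
    (hL : ∀ U ∈ L, Good Y U ∧ CommOn Y T U) :
    ∀ f, Sm Y f → ∀ x ∈ Y, T (applyL L f) x = applyL L (T f) x := by
  induction L with
  | nil => intro f hf x hx; rfl
  | cons U L ih =>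
    intro f hf x hx
    have hU := hL U (List.mem_cons_self)
    have hL' := fun V hV => hL V (List.mem_cons_of_mem _ hV)
    have hsmL : Sm Y (applyL L f) := applyL_sm (fun V hV => (hL' V hV).1) hf
    have heq : Set.EqOn (T (applyL L f)) (applyL L (T f)) Y := fun y hy => ih hL' f hf y hy
    calc T (applyL (U :: L) f) x = T (U (applyL L f)) x := rfl
      _ = U (T (applyL L f)) x := hU.2 _ hsmL x hx
      _ = U (applyL L (T f)) x := hU.1.congr _ _ heq hx
      _ = applyL (U :: L) (T f) x := rfl

theorem comm_pd_pdPow (hY : IsOpen Y) (i : Fin n) (α : Fin n → ℕ) :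
    CommOn Y (pd i) (pdPow α) := by
  intro f hf x hx
  rw [pdPow_eq, pdPow_eq]
  refine comm_applyL (good_pd hY i) ?_ f hf x hx
  intro U hU
  rcases List.mem_map.1 hU with ⟨j, _, rfl⟩
  exact ⟨(good_pd hY j).iterate _,
    (comm_pd_pd hY i j).iterate_right (good_pd hY i) (good_pd hY j) _⟩

theorem comm_linComb_right {T} (hT : Good Y T) {ι : Type*} (s : Finset ι) (c : ι → ℂ)
    (U : ι → (EuclideanSpace ℝ (Fin n) → ℂ) → (EuclideanSpace ℝ (Fin n) → ℂ))
    (hU : ∀ i ∈ s, Good Y (U i) ∧ CommOn Y T (U i)) :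
    CommOn Y T (fun f x => ∑ i ∈ s, c i * U i f x) := by
  intro f hf x hx
  have h1 : T (fun y => ∑ i ∈ s, c i * U i f y) x = ∑ i ∈ s, T (fun y => c i * U i f y) x :=
    hT.sum_apply s (fun i y => c i * U i f y)
      (fun i hi => contDiffOn_const.mul ((hU i hi).1.sm f hf)) hx
  rw [h1]
  refine Finset.sum_congr rfl fun i hi => ?_
  rw [hT.smul (c i) (U i f) ((hU i hi).1.sm f hf) x hx, (hU i hi).2 f hf x hx]

theorem comm_pd_PD (hY : IsOpen Y) (i : Fin n) (P : MvPolynomial (Fin n) ℂ) :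
    CommOn Y (pd i) (PD P) :=
  comm_linComb_right (good_pd hY i) P.support _ (fun α => pdPow (⇑α))
    (fun α _ => ⟨good_pdPow hY α, comm_pd_pdPow hY i ⇑α⟩)

theorem comm_pdPow_pdPow (hY : IsOpen Y) (α β : Fin n → ℕ) :
    CommOn Y (pdPow α) (pdPow β) := by
  intro f hf x hx
  conv_lhs => rw [pdPow_eq β]
  conv_rhs => rw [pdPow_eq β]
  refine comm_applyL (good_pdPow hY α) ?_ f hf x hx
  intro U hU
  rcases List.mem_map.1 hU with ⟨j, _, rfl⟩
  exact ⟨(good_pd hY j).iterate _,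
    ((comm_pd_pdPow hY j α).symm).iterate_right (good_pdPow hY α) (good_pd hY j) _⟩

theorem comm_pdPow_PD (hY : IsOpen Y) (α : Fin n → ℕ) (P : MvPolynomial (Fin n) ℂ) :
    CommOn Y (pdPow α) (PD P) :=
  comm_linComb_right (good_pdPow hY α) P.support _ (fun β => pdPow (⇑β))
    (fun β _ => ⟨good_pdPow hY β, comm_pdPow_pdPow hY α ⇑β⟩)

theorem comm_PD_PD (hY : IsOpen Y) (P R : MvPolynomial (Fin n) ℂ) :
    CommOn Y (PD P) (PD R) :=
  (comm_linComb_right (good_PD hY R) P.support _ (fun α => pdPow (⇑α))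
    (fun α _ => ⟨good_pdPow hY α, (comm_pdPow_PD hY ⇑α R).symm⟩)).symm

/-- The lists we apply consist of iterates of `PD`-operators. -/
def PDIter (L : List ((EuclideanSpace ℝ (Fin n) → ℂ) → (EuclideanSpace ℝ (Fin n) → ℂ))) : Prop :=
  ∀ U ∈ L, ∃ (P : MvPolynomial (Fin n) ℂ) (a : ℕ), U = (PD P)^[a]

theorem PDIter.good (hY : IsOpen Y) {L} (hL : PDIter (n := n) L) : ∀ U ∈ L, Good Y U := by
  intro U hU; rcases hL U hU with ⟨P, a, rfl⟩; exact (good_PD hY P).iterate a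

theorem PDIter.comm (hY : IsOpen Y) {L} (hL : PDIter (n := n) L)
    (P : MvPolynomial (Fin n) ℂ) : ∀ U ∈ L, Good Y U ∧ CommOn Y (PD P) U := by
  intro U hU; rcases hL U hU with ⟨R, a, rfl⟩
  exact ⟨(good_PD hY R).iterate a,
    (comm_PD_PD hY P R).iterate_right (good_PD hY P) (good_PD hY R) a⟩

theorem pull_succ (hY : IsOpen Y) {L₁ L₂ : List _} (h₁ : PDIter (n := n) L₁)
    (h₂ : PDIter (n := n) L₂) (P : MvPolynomial (Fin n) ℂ) (a : ℕ)
    {f : EuclideanSpace ℝ (Fin n) → ℂ} (hf : Sm Y f) {x} (hx : x ∈ Y) :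
    applyL (L₁ ++ (PD P)^[a+1] :: L₂) f x = PD P (applyL (L₁ ++ (PD P)^[a] :: L₂) f) x := by
  have hg : Sm Y (applyL L₂ f) := applyL_sm (h₂.good hY) hf
  rw [applyL_append, applyL_append, applyL_cons, applyL_cons]
  rw [Function.iterate_succ_apply' (PD P) a (applyL L₂ f)]
  exact (comm_applyL (good_PD hY P) (h₁.comm hY P) _ (((good_PD hY P).iterate a).sm _ hg) x hx).symm

/-- The operator list for `∏ₖ Qₘ₋ₖ₋₁(D)^[s k]`. -/
def opL (m : ℕ) (Q : ℕ → MvPolynomial (Fin n) ℂ) (s : Fin m → ℕ) :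
    List ((EuclideanSpace ℝ (Fin n) → ℂ) → (EuclideanSpace ℝ (Fin n) → ℂ)) :=
  (List.finRange m).map fun k => (PD (Q (m - (k.1+1))))^[s k]

theorem opL_pditer (m : ℕ) (Q : ℕ → MvPolynomial (Fin n) ℂ) (s : Fin m → ℕ) :
    PDIter (n := n) (opL m Q s) := by
  intro U hU
  rcases List.mem_map.1 hU with ⟨k, _, rfl⟩
  exact ⟨Q (m - (k.1+1)), s k, rfl⟩

theorem opL_sm (hY : IsOpen Y) (m : ℕ) (Q : ℕ → MvPolynomial (Fin n) ℂ) (s : Fin m → ℕ)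
    {f : EuclideanSpace ℝ (Fin n) → ℂ} (hf : Sm Y f) : Sm Y (applyL (opL m Q s) f) :=
  applyL_sm ((opL_pditer m Q s).good hY) hf

theorem opL_zero (m : ℕ) (Q : ℕ → MvPolynomial (Fin n) ℂ)
    (f : EuclideanSpace ℝ (Fin n) → ℂ) : applyL (opL m Q (fun _ => 0)) f = f := by
  apply applyL_id
  intro U hU
  rcases List.mem_map.1 hU with ⟨k, _, rfl⟩
  exact Function.iterate_zero _

theorem opL_bump (hY : IsOpen Y) (m : ℕ) (Q : ℕ → MvPolynomial (Fin n) ℂ)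
    (s : Fin m → ℕ) (j : Fin m) {f : EuclideanSpace ℝ (Fin n) → ℂ} (hf : Sm Y f)
    {x} (hx : x ∈ Y) :
    applyL (opL m Q (Function.update s j (s j + 1))) f x
      = PD (Q (m - (j.1+1))) (applyL (opL m Q s) f) x := by
  classical
  set F : Fin m → ((EuclideanSpace ℝ (Fin n) → ℂ) → (EuclideanSpace ℝ (Fin n) → ℂ)) :=
    fun k => (PD (Q (m - (k.1+1))))^[s k] with hF
  set F' : Fin m → ((EuclideanSpace ℝ (Fin n) → ℂ) → (EuclideanSpace ℝ (Fin n) → ℂ)) :=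
    fun k => (PD (Q (m - (k.1+1))))^[Function.update s j (s j + 1) k] with hF'
  have hjlen : (j : ℕ) < (List.finRange m).length := by simp [j.2]
  have hsplit : List.finRange m
      = (List.finRange m).take j.1 ++ j :: (List.finRange m).drop (j.1+1) := by
    conv_lhs => rw [← List.take_append_drop j.1 (List.finRange m)]
    congr 1
    rw [List.drop_eq_getElem_cons hjlen]
    congr 1
    simp
  have hmemA : ∀ k ∈ (List.finRange m).take j.1, k ≠ j := by
    intro k hk
    rw [List.mem_take_iff_getElem] at hk
    rcases hk with ⟨i, hi, rfl⟩
    intro hcon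
    have h2 := congrArg Fin.val hcon
    simp at h2 hi
    omega
  have hmemB : ∀ k ∈ (List.finRange m).drop (j.1+1), k ≠ j := by
    intro k hk
    rw [List.mem_iff_getElem] at hk
    rcases hk with ⟨i, hi, rfl⟩
    rw [List.getElem_drop]
    intro hcon
    have := congrArg Fin.val hcon
    simp at this
    omega
  have hmapA : ((List.finRange m).take j.1).map F' = ((List.finRange m).take j.1).map F := by
    apply List.map_congr_left
    intro k hk
    simp only [hF, hF', Function.update_of_ne (hmemA k hk)]
  have hmapB : ((List.finRange m).drop (j.1+1)).map F' = ((List.finRange m).drop (j.1+1)).map F := by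
    apply List.map_congr_left
    intro k hk
    simp only [hF, hF', Function.update_of_ne (hmemB k hk)]
  have hA : PDIter (n := n) (((List.finRange m).take j.1).map F) := by
    intro U hU; rcases List.mem_map.1 hU with ⟨k, _, rfl⟩; exact ⟨_, _, rfl⟩
  have hB : PDIter (n := n) (((List.finRange m).drop (j.1+1)).map F) := by
    intro U hU; rcases List.mem_map.1 hU with ⟨k, _, rfl⟩; exact ⟨_, _, rfl⟩
  have e1 : opL m Q (Function.update s j (s j + 1))
      = ((List.finRange m).take j.1).map F ++ (PD (Q (m - (j.1+1))))^[s j + 1]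
        :: ((List.finRange m).drop (j.1+1)).map F := by
    show (List.finRange m).map F' = _
    conv_lhs => rw [hsplit]
    rw [List.map_append, List.map_cons, hmapA, hmapB]
    congr 2
    simp [hF', Function.update_self]
  have e2 : opL m Q s
      = ((List.finRange m).take j.1).map F ++ (PD (Q (m - (j.1+1))))^[s j]
        :: ((List.finRange m).drop (j.1+1)).map F := by
    show (List.finRange m).map F = _
    conv_lhs => rw [hsplit]
    rw [List.map_append, List.map_cons]
  rw [e1, e2]
  exact pull_succ hY hA hB _ _ hf hx

theorem pd_zero_fn (i : Fin n) : pd i (fun _ => (0:ℂ)) = fun _ => (0:ℂ) := by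
  funext x
  simp [pd]

theorem applyL_zero_fn {L : List ((EuclideanSpace ℝ (Fin n) → ℂ) → _)}
    (hL : ∀ U ∈ L, U (fun _ => (0:ℂ)) = fun _ => (0:ℂ)) :
    applyL L (fun _ => (0:ℂ)) = fun _ => (0:ℂ) := by
  induction L with
  | nil => rfl
  | cons U L ih =>
    rw [applyL_cons, ih fun V hV => hL V (List.mem_cons_of_mem _ hV),
      hL U (List.mem_cons_self)]

theorem pdPow_zero_fn (α : Fin n → ℕ) : pdPow α (fun _ => (0:ℂ)) = fun _ => (0:ℂ) := by
  rw [pdPow_eq]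
  apply applyL_zero_fn
  intro U hU
  rcases List.mem_map.1 hU with ⟨i, _, rfl⟩
  exact Function.iterate_fixed (pd_zero_fn i) _

theorem PD_zero_fn (P : MvPolynomial (Fin n) ℂ) : PD P (fun _ => (0:ℂ)) = fun _ => (0:ℂ) := by
  funext x
  simp [PD, pdPow_zero_fn]

theorem multinomial_update_sum {m : ℕ} (s : Fin m → ℕ) (hs : ∃ j, 1 ≤ s j) :
    ∑ j ∈ Finset.univ.filter (fun j => 1 ≤ s j),
      Nat.multinomial Finset.univ (Function.update s j (s j - 1))
      = Nat.multinomial Finset.univ s := by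
  classical
  set N := ∑ i, s i with hN
  set Pr := ∏ i, (s i)! with hPr
  have hPrpos : 0 < Pr := Finset.prod_pos fun i _ => Nat.factorial_pos _
  obtain ⟨j₀, hj₀⟩ := hs
  have hNpos : 1 ≤ N := le_trans hj₀ (Finset.single_le_sum (fun i _ => Nat.zero_le _)
    (Finset.mem_univ j₀))
  have key : ∀ j : Fin m, 1 ≤ s j →
      Pr * Nat.multinomial Finset.univ (Function.update s j (s j - 1)) = s j * (N-1)! := by
    intro j hj
    have hsum : ∑ i, Function.update s j (s j - 1) i = N - 1 := by
      rw [Finset.sum_update_of_mem (Finset.mem_univ j)]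
      have h2 : N = s j + ∑ i ∈ Finset.univ \ {j}, s i :=
        Finset.sum_eq_add_sum_sdiff_singleton_of_mem (Finset.mem_univ j) s
      omega
    have hprod : Pr = s j * ∏ i, (Function.update s j (s j - 1) i)! := by
      have h1 : ∏ i, (Function.update s j (s j - 1) i)!
          = (s j - 1)! * ∏ i ∈ Finset.univ \ {j}, (s i)! := by
        have := Finset.prod_update_of_mem (Finset.mem_univ j) (fun i => (s i)!) ((s j - 1)!)
        rw [← this]
        apply Finset.prod_congr rfl
        intro i _
        by_cases hi : i = j
        · subst hi; simp
        · rw [Function.update_of_ne hi, Function.update_of_ne hi]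
      have h2 : Pr = (s j)! * ∏ i ∈ Finset.univ \ {j}, (s i)! :=
        Finset.prod_eq_mul_prod_sdiff_singleton_of_mem (Finset.mem_univ j) (fun i => (s i)!)
      rw [h1, h2, ← mul_assoc, Nat.mul_factorial_pred (by omega)]
    rw [hprod, mul_assoc, Nat.multinomial_spec, hsum]
  have hcancel : Pr * (∑ j ∈ Finset.univ.filter (fun j => 1 ≤ s j),
      Nat.multinomial Finset.univ (Function.update s j (s j - 1)))
      = Pr * Nat.multinomial Finset.univ s := by
    rw [Finset.mul_sum]
    have h1 : ∀ j ∈ Finset.univ.filter (fun j => 1 ≤ s j),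
        Pr * Nat.multinomial Finset.univ (Function.update s j (s j - 1)) = s j * (N-1)! := by
      intro j hj
      exact key j (Finset.mem_filter.1 hj).2
    rw [Finset.sum_congr rfl h1, ← Finset.sum_mul]
    have h2 : ∑ j ∈ Finset.univ.filter (fun j => 1 ≤ s j), s j = N := by
      rw [hN]
      exact Finset.sum_filter_of_ne fun j _ h => Nat.one_le_iff_ne_zero.2 h
    rw [h2, Nat.mul_factorial_pred (by omega), Nat.multinomial_spec]
  exact Nat.eq_of_mul_eq_mul_left hPrpos hcancel

theorem mem_box {m L : ℕ} (s : Fin m → ℕ) (h : ∑ j : Fin m, (j.1+1) * s j ≤ L) :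
    s ∈ Fintype.piFinset fun _ : Fin m => Finset.range (L+1) := by
  rw [Fintype.mem_piFinset]
  intro i
  rw [Finset.mem_range]
  have h3 : (i.1+1) * s i ≤ ∑ j : Fin m, (j.1+1) * s j :=
    Finset.single_le_sum (f := fun j : Fin m => (j.1+1) * s j)
      (fun j _ => Nat.zero_le _) (Finset.mem_univ i)
  have h4 : s i ≤ (i.1+1) * s i := Nat.le_mul_of_pos_left _ (Nat.succ_pos _)
  omega

theorem sum_update_general' {m : ℕ} (t : Fin m → ℕ) (j : Fin m) (v : ℕ) :
    ∑ i, (Function.update t j v) i + t j = (∑ i, t i) + v := by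
  rw [Finset.sum_update_of_mem (Finset.mem_univ j),
    Finset.sum_eq_add_sum_sdiff_singleton_of_mem (Finset.mem_univ j) t]
  omega

theorem sigma_update {m : ℕ} (t : Fin m → ℕ) (j : Fin m) (v : ℕ) :
    ∑ i : Fin m, (i.1+1) * (Function.update t j v) i + (j.1+1) * t j
      = (∑ i : Fin m, (i.1+1) * t i) + (j.1+1) * v := by
  have he : (fun i : Fin m => (i.1+1) * Function.update t j v i)
      = Function.update (fun i : Fin m => (i.1+1) * t i) j ((j.1+1) * v) := by
    funext i
    by_cases hi : i = j
    · subst hi; simp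
    · rw [Function.update_of_ne hi, Function.update_of_ne hi]
  rw [he, Finset.sum_update_of_mem (Finset.mem_univ j),
    Finset.sum_eq_add_sum_sdiff_singleton_of_mem (Finset.mem_univ j) (fun i : Fin m => (i.1+1) * t i)]
  omega


/-- **Proposition 4.5.** Explicit formula for the recursively defined
operators: `𝒞_{m−1+l}(f) = Σ_{σ(s)=l} (−1)^{|s|} multinomial(s) ∏_{k=1}^m Q_{m−k}(D)^{s_k} f`
on `Y`, where `σ(s) = Σ_{j=1}^m j s_j`. -/
theorem cc_explicit_formula {n : ℕ} (hn : 1 ≤ n) (m : ℕ) (hm : 1 ≤ m)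
    (Q : ℕ → MvPolynomial (Fin n) ℂ) (hQm : Q m = 1)
    (Y : Set (EuclideanSpace ℝ (Fin n))) (hY : IsOpen Y)
    (l : ℕ) (f : EuclideanSpace ℝ (Fin n) → ℂ) (hf : ContDiffOn ℝ (⊤ : ℕ∞) f Y) :
    ∀ x ∈ Y,
      CC m Q (m-1+l) f x =
      ∑ s ∈ (Fintype.piFinset fun _ : Fin m => Finset.range (l+1)).filter
          (fun s => ∑ j : Fin m, (j.1+1) * s j = l),
        ((-1 : ℂ) ^ (∑ j, s j) * (Nat.multinomial Finset.univ s : ℂ)) *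
          ((((List.finRange m).map fun k => (PD (Q (m - (k.1+1))))^[s k]).foldr
            (· ∘ ·) id f) x) := by
  classical
  have hfs : Sm Y f := hf
  have key : ∀ l : ℕ, ∀ x ∈ Y, CC m Q (m-1+l) f x =
      ∑ s ∈ (Fintype.piFinset fun _ : Fin m => Finset.range (l+1)).filter
          (fun s => ∑ j : Fin m, (j.1+1) * s j = l),
        ((-1 : ℂ) ^ (∑ j, s j) * (Nat.multinomial Finset.univ s : ℂ)) *
          applyL (opL m Q s) f x := by
    intro l
    induction l using Nat.strong_induction_on with
    | _ l ih =>
    intro x hx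
    rcases Nat.eq_zero_or_pos l with hl | hl
    · subst hl
      have hcc : CC m Q (m-1+0) f = f := by
        rw [CC]
        have h1 : ¬ (m - 1 + 0 + 1 < m) := by omega
        have h2 : m - 1 + 0 + 1 = m := by omega
        rw [if_neg h1, if_pos h2]
      rw [hcc]
      have hset : (Fintype.piFinset fun _ : Fin m => Finset.range (0+1)).filter
          (fun s => ∑ j : Fin m, (j.1+1) * s j = 0) = {fun _ => 0} := by
        ext s
        simp only [Finset.mem_filter, Fintype.mem_piFinset, Finset.mem_range,
          Finset.mem_singleton]
        constructor
        · rintro ⟨h1, _⟩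
          funext i
          have := h1 i
          omega
        · rintro rfl
          simp
      rw [hset, Finset.sum_singleton, opL_zero]
      simp [Nat.multinomial]
    · -- l ≥ 1
      have hcc : CC m Q (m-1+l) f
          = -∑ k : Fin m, PD (Q k.1) (CC m Q (k.1 + (m-1+l) - m) f) := by
        rw [CC]
        have h1 : ¬ (m - 1 + l + 1 < m) := by omega
        have h2 : ¬ (m - 1 + l + 1 = m) := by omega
        rw [if_neg h1, if_neg h2]
      rw [hcc]
      simp only [Pi.neg_apply, Finset.sum_apply]
      have hrev : ∑ k : Fin m, PD (Q k.1) (CC m Q (k.1 + (m-1+l) - m) f) x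
          = ∑ j : Fin m, PD (Q j.rev.1) (CC m Q (j.rev.1 + (m-1+l) - m) f) x :=
        Fintype.sum_equiv Fin.revPerm _ _ (fun k => by simp)
      rw [hrev]
      have hterm : ∀ j : Fin m, PD (Q j.rev.1) (CC m Q (j.rev.1 + (m-1+l) - m) f) x
          = ∑ t ∈ (Fintype.piFinset fun _ : Fin m => Finset.range (l+1)).filter
              (fun t => (∑ i : Fin m, (i.1+1) * t i) + (j.1+1) = l),
            ((-1 : ℂ) ^ (∑ i, t i) * (Nat.multinomial Finset.univ t : ℂ))
              * applyL (opL m Q (Function.update t j (t j + 1))) f x := by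
        intro j
        have hjrev : j.rev.1 = m - (j.1+1) := Fin.val_rev j
        have hjm : j.1 < m := j.2
        by_cases hjl : j.1 + 1 ≤ l
        · have hidx : j.rev.1 + (m-1+l) - m = m - 1 + (l - (j.1+1)) := by omega
          rw [hidx]
          set l' := l - (j.1+1) with hl'def
          have hl'lt : l' < l := by omega
          have hIH := ih l' hl'lt
          have heq : Set.EqOn (CC m Q (m-1+l') f)
              (fun y => ∑ t ∈ (Fintype.piFinset fun _ : Fin m => Finset.range (l'+1)).filter
                  (fun t => ∑ i : Fin m, (i.1+1) * t i = l'),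
                ((-1 : ℂ) ^ (∑ i, t i) * (Nat.multinomial Finset.univ t : ℂ))
                  * applyL (opL m Q t) f y) Y := fun y hy => hIH y hy
          have hQrev : Q j.rev.1 = Q (m - (j.1+1)) := by rw [hjrev]
          rw [hQrev, (good_PD hY (Q (m - (j.1+1)))).congr _ _ heq hx]
          rw [(good_PD hY (Q (m - (j.1+1)))).sum_apply _
            (fun t y => ((-1 : ℂ) ^ (∑ i, t i) * (Nat.multinomial Finset.univ t : ℂ))
              * applyL (opL m Q t) f y)
            (fun t _ => contDiffOn_const.mul (opL_sm hY m Q t hfs)) hx]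
          have hsets : (Fintype.piFinset fun _ : Fin m => Finset.range (l'+1)).filter
              (fun t => ∑ i : Fin m, (i.1+1) * t i = l')
              = (Fintype.piFinset fun _ : Fin m => Finset.range (l+1)).filter
              (fun t => (∑ i : Fin m, (i.1+1) * t i) + (j.1+1) = l) := by
            ext t
            simp only [Finset.mem_filter]
            constructor
            · rintro ⟨_, h2⟩
              exact ⟨mem_box t (by omega), by omega⟩
            · rintro ⟨_, h2⟩
              exact ⟨mem_box t (by omega), by omega⟩
          rw [← hsets]
          refine Finset.sum_congr rfl fun t ht => ?_
          have hts : Sm Y (applyL (opL m Q t) f) := opL_sm hY m Q t hfs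
          rw [(good_PD hY (Q (m - (j.1+1)))).smul _ _ hts x hx,
            ← opL_bump hY m Q t j hfs hx]
        · -- j.1 + 1 > l : both sides vanish
          have hidx : j.rev.1 + (m-1+l) - m + 1 < m := by omega
          have hCC0 : CC m Q (j.rev.1 + (m-1+l) - m) f = 0 := by
            rw [CC, if_pos hidx]
          rw [hCC0,
            show (0 : EuclideanSpace ℝ (Fin n) → ℂ) = (fun _ => (0:ℂ)) from rfl,
            PD_zero_fn]
          have hempty : (Fintype.piFinset fun _ : Fin m => Finset.range (l+1)).filter
              (fun t => (∑ i : Fin m, (i.1+1) * t i) + (j.1+1) = l) = ∅ :=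
            Finset.filter_false_of_mem (fun t _ => by omega)
          rw [hempty]
          simp
      rw [Finset.sum_congr rfl (fun j _ => hterm j)]
      -- now the double-sum reindexing
      rw [Finset.sum_sigma']
      have hbij : ∑ p ∈ (Finset.univ : Finset (Fin m)).sigma
            (fun j => (Fintype.piFinset fun _ : Fin m => Finset.range (l+1)).filter
              (fun t => (∑ i : Fin m, (i.1+1) * t i) + (j.1+1) = l)),
          ((-1 : ℂ) ^ (∑ i, p.2 i) * (Nat.multinomial Finset.univ p.2 : ℂ))
            * applyL (opL m Q (Function.update p.2 p.1 (p.2 p.1 + 1))) f x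
          = ∑ p ∈ ((Fintype.piFinset fun _ : Fin m => Finset.range (l+1)).filter
              (fun s => ∑ i : Fin m, (i.1+1) * s i = l)).sigma
            (fun s => Finset.univ.filter (fun j : Fin m => 1 ≤ s j)),
          -(((-1 : ℂ) ^ (∑ i, p.1 i)
              * (Nat.multinomial Finset.univ (Function.update p.1 p.2 (p.1 p.2 - 1)) : ℂ))
            * applyL (opL m Q p.1) f x) := by
        refine Finset.sum_bij' (fun p _ => ⟨Function.update p.2 p.1 (p.2 p.1 + 1), p.1⟩)
          (fun p _ => ⟨p.2, Function.update p.1 p.2 (p.1 p.2 - 1)⟩) ?_ ?_ ?_ ?_ ?_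
        · rintro ⟨j, t⟩ hp
          simp only [Finset.mem_sigma, Finset.mem_filter, Finset.mem_univ, true_and] at hp ⊢
          obtain ⟨_, h2⟩ := hp
          have hσ := sigma_update t j (t j + 1)
          have hmul : (j.1+1) * (t j + 1) = (j.1+1) * t j + (j.1+1) := Nat.mul_succ _ _
          refine ⟨⟨mem_box _ (by omega), by omega⟩, ?_⟩
          rw [Function.update_self]
          omega
        · rintro ⟨s, j⟩ hp
          simp only [Finset.mem_sigma, Finset.mem_filter, Finset.mem_univ, true_and] at hp ⊢
          obtain ⟨⟨_, h2⟩, h3⟩ := hp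
          have hσ := sigma_update s j (s j - 1)
          have hmul : (j.1+1) * (s j - 1) + (j.1+1) = (j.1+1) * s j := by
            rw [← Nat.mul_succ]
            congr 1
            omega
          refine ⟨mem_box _ (by omega), by omega⟩
        · rintro ⟨j, t⟩ _
          simp only [Sigma.mk.inj_iff, heq_eq_eq, true_and]
          rw [Function.update_idem]
          simp only [Function.update_self, Nat.add_sub_cancel]
          exact Function.update_eq_self j t
        · rintro ⟨s, j⟩ hp
          simp only [Finset.mem_sigma, Finset.mem_filter, Finset.mem_univ, true_and] at hp
          obtain ⟨_, h3⟩ := hp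
          simp only [Sigma.mk.inj_iff, heq_eq_eq, and_true]
          rw [Function.update_idem, Function.update_self]
          rw [show s j - 1 + 1 = s j by omega]
          exact Function.update_eq_self j s
        · rintro ⟨j, t⟩ hp
          simp only [Finset.mem_sigma, Finset.mem_filter, Finset.mem_univ, true_and] at hp
          have h4 : Function.update (Function.update t j (t j + 1)) j
              (Function.update t j (t j + 1) j - 1) = t := by
            rw [Function.update_idem, Function.update_self, Nat.add_sub_cancel]
            exact Function.update_eq_self j t
          rw [h4]
          have h5 : ∑ i, Function.update t j (t j + 1) i = (∑ i, t i) + 1 := by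
            have := sum_update_general' t j (t j + 1)
            omega
          rw [h5, pow_succ]
          ring
      rw [hbij, Finset.sum_neg_distrib, neg_neg, Finset.sum_sigma]
      refine Finset.sum_congr rfl fun s hs => ?_
      simp only [Finset.mem_filter] at hs
      obtain ⟨_, hσs⟩ := hs
      have hex : ∃ j, 1 ≤ s j := by
        by_contra hcon
        push_neg at hcon
        have : ∀ j : Fin m, s j = 0 := fun j => by have := hcon j; omega
        have : ∑ i : Fin m, (i.1+1) * s i = 0 :=
          Finset.sum_eq_zero fun i _ => by rw [this i, Nat.mul_zero]
        omega
      have hmult := multinomial_update_sum s hex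
      show ∑ j ∈ Finset.univ.filter (fun j : Fin m => 1 ≤ s j),
          ((-1 : ℂ) ^ (∑ i, s i)
            * (Nat.multinomial Finset.univ (Function.update s j (s j - 1)) : ℂ))
          * applyL (opL m Q s) f x
        = ((-1 : ℂ) ^ (∑ i, s i) * (Nat.multinomial Finset.univ s : ℂ)) * applyL (opL m Q s) f x
      rw [← Finset.sum_mul, ← Finset.mul_sum, ← Nat.cast_sum, hmult]
  intro x hx
  rw [key l x hx]
  refine Finset.sum_congr rfl fun s _ => ?_
  rw [foldr_comp_eq_applyL]
  rfl
end
end
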